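/- Gauge equivalence of the quantum trigonometric Calogero–Moser (Macdonald-type) Hamiltonian: let γ ∈ ℂ with q = e^{−2γ}, and define difference operators acting on functions u: ℂ^N → ℂ by (H̃u)(x) := Σ_{i=1}^N [ Π_{j≠i} ((q² e^{y_{ij}} − q^{−2} e^{−y_{ij}})/(q e^{y_{ij}} − q^{−1} e^{−y_{ij}})) ] u(y) and (Hu)(x) := Σ_{i=1}^N [ Π_{j≠i} ((q e^{y_{ij}} − q^{−1} e^{−y_{ij}})(q^{−1} e^{y_{ij}} − q e^{−y_{ij}})/(e^{y_{ij}} − e^{−y_{ij}})²) ] u(y), where in the i-th summand y := x + 2γδ_i and y_{ij} = y_i − y_j. Let f(x) := Π_{k<l} (e^{x_{kl}} − e^{−x_{kl}}) / ((q e^{x_{kl}} − q^{−1} e^{−x_{kl}})(q^{−1} e^{x_{kl}} − q e^{−x_{kl}})). Then H = f · H̃ · f^{−1}: for every function u and every x at which all the factors above are defined and nonzero (i.e. x_{ij} ∉ iπℤ and x_{ij} ± 2γ ∉ iπℤ ∪ (iπℤ ± 2γ) for i≠j, so that all denominators and f-values involved are nonzero), one has f(x) · (H̃(u/f))(x) =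 (Hu)(x). -/

import Mathlib

/- STATEMENT 19: Gauge equivalence of the quantum trigonometric Calogero–Moser
   (Macdonald-type) Hamiltonian: H = f · H̃ · f⁻¹, i.e.
   f(x)·(H̃(u/f))(x) = (Hu)(x) at all admissible points x. -/

noncomputable section
open Complex
open scoped BigOperators

def inPiZ (z : ℂ) : Prop := ∃ n : ℤ, z = (n : ℂ) * (Real.pi : ℂ) * Complex.I

variable (N : ℕ) (γ : ℂ)

/-- q = e^{−2γ} -/
def qq : ℂ := Complex.exp (-2 * γ)

/-- the shifted point y = x + 2γδ_i -/
def ypt (x : Fin N → ℂ) (i : Fin N) : Fin N → ℂ :=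
  x + (2 * γ) • (Pi.single i 1 : Fin N → ℂ)

/-- (H̃u)(x) = Σ_i Π_{j≠i} ((q²e^{y_{ij}} − q^{−2}e^{−y_{ij}})/(qe^{y_{ij}} − q^{−1}e^{−y_{ij}})) u(y),
    with y = x + 2γδ_i -/
def Htil (u : (Fin N → ℂ) → ℂ) (x : Fin N → ℂ) : ℂ :=
  ∑ i : Fin N,
    (∏ j ∈ Finset.univ.erase i,
      ((qq γ)^2 * Complex.exp (ypt N γ x i i - ypt N γ x i j) -
        (qq γ)⁻¹^2 * Complex.exp (-(ypt N γ x i i - ypt N γ x i j))) /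
      (qq γ * Complex.exp (ypt N γ x i i - ypt N γ x i j) -
        (qq γ)⁻¹ * Complex.exp (-(ypt N γ x i i - ypt N γ x i j)))) *
    u (ypt N γ x i)

/-- (Hu)(x) = Σ_i Π_{j≠i}
    ((qe^{y_{ij}} − q^{−1}e^{−y_{ij}})(q^{−1}e^{y_{ij}} − qe^{−y_{ij}})/(e^{y_{ij}} − e^{−y_{ij}})²) u(y) -/
def Hop (u : (Fin N → ℂ) → ℂ) (x : Fin N → ℂ) : ℂ :=
  ∑ i : Fin N,
    (∏ j ∈ Finset.univ.erase i,
      (qq γ * Complex.exp (ypt N γ x i i - ypt N γ x i j) -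
        (qq γ)⁻¹ * Complex.exp (-(ypt N γ x i i - ypt N γ x i j))) *
      ((qq γ)⁻¹ * Complex.exp (ypt N γ x i i - ypt N γ x i j) -
        qq γ * Complex.exp (-(ypt N γ x i i - ypt N γ x i j))) /
      (Complex.exp (ypt N γ x i i - ypt N γ x i j) -
        Complex.exp (-(ypt N γ x i i - ypt N γ x i j)))^2) *
    u (ypt N γ x i)

/-- the gauge function
    f(x) = Π_{k<l} (e^{x_{kl}} − e^{−x_{kl}}) /
             ((qe^{x_{kl}} − q^{−1}e^{−x_{kl}})(q^{−1}e^{x_{kl}} − qe^{−x_{kl}})) -/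
def fgauge (x : Fin N → ℂ) : ℂ :=
  ∏ k : Fin N, ∏ l : Fin N,
    if k < l then
      (Complex.exp (x k - x l) - Complex.exp (-(x k - x l))) /
        ((qq γ * Complex.exp (x k - x l) - (qq γ)⁻¹ * Complex.exp (-(x k - x l))) *
          ((qq γ)⁻¹ * Complex.exp (x k - x l) - qq γ * Complex.exp (-(x k - x l))))
    else 1


/-! ### Auxiliary machinery for the gauge-equivalence proof -/

/-- `Dd w = e^w − e^{−w}`; every binomial `q^m e^w − q^{−m} e^{−w}` is `Dd (w − 2mγ)`. -/
def Dd (w : ℂ) : ℂ := Complex.exp w - Complex.exp (-w)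

lemma Dd_ne {w : ℂ} (h : ¬ inPiZ w) : Dd w ≠ 0 := by
  intro hc
  apply h
  unfold Dd at hc
  have h2 := sub_eq_zero.mp hc
  rw [Complex.exp_eq_exp_iff_exists_int] at h2
  obtain ⟨n, hn⟩ := h2
  exact ⟨n, by linear_combination hn / 2⟩

lemma Dd_neg (w : ℂ) : Dd (-w) = - Dd w := by simp [Dd]

lemma r0 (w : ℂ) : Complex.exp w - Complex.exp (-w) = Dd w := rfl

lemma r1 (w : ℂ) : qq γ * Complex.exp w - (qq γ)⁻¹ * Complex.exp (-w) = Dd (w - 2*γ) := by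
  unfold qq Dd
  rw [← Complex.exp_neg, ← Complex.exp_add, ← Complex.exp_add]
  ring_nf

lemma r2 (w : ℂ) : (qq γ)^2 * Complex.exp w - (qq γ)⁻¹^2 * Complex.exp (-w) = Dd (w - 4*γ) := by
  unfold qq Dd
  rw [← Complex.exp_neg, sq, sq, ← Complex.exp_add, ← Complex.exp_add,
    ← Complex.exp_add, ← Complex.exp_add]
  ring_nf

lemma r3 (w : ℂ) : (qq γ)⁻¹ * Complex.exp w - qq γ * Complex.exp (-w) = Dd (w + 2*γ) := by
  unfold qq Dd
  rw [← Complex.exp_neg, ← Complex.exp_add, ← Complex.exp_add]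
  ring_nf

/-- the per-pair gauge factor -/
def Gg (z : ℂ) : ℂ := Dd z / (Dd (z - 2*γ) * Dd (z + 2*γ))

lemma Gg_neg (w : ℂ) : Gg γ (-w) = - Gg γ w := by
  unfold Gg
  rw [show -w - 2*γ = -(w + 2*γ) by ring, show -w + 2*γ = -(w - 2*γ) by ring,
    Dd_neg, Dd_neg, Dd_neg, neg_mul_neg, neg_div]
  ring

lemma Gg_ne (z : ℂ) (h0 : Dd z ≠ 0) (h1 : Dd (z - 2*γ) ≠ 0) (h2 : Dd (z + 2*γ) ≠ 0) :
    Gg γ z ≠ 0 := div_ne_zero h0 (mul_ne_zero h1 h2)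

/-- the scalar identity behind gauge equivalence -/
lemma key (z : ℂ) (h0 : Dd z ≠ 0) (h1 : Dd (z - 2*γ) ≠ 0) (h2 : Dd (z + 2*γ) ≠ 0)
    (h3 : Dd (z + 4*γ) ≠ 0) :
    Gg γ z * (Dd (z - 2*γ) / Dd z) = Dd z * Dd (z + 4*γ) / (Dd (z + 2*γ))^2 * Gg γ (z + 2*γ) := by
  unfold Gg
  rw [show z + 2*γ - 2*γ = z by ring, show z + 2*γ + 2*γ = z + 4*γ by ring]
  field_simp
  ring_nf
  rw [show z + γ * 4 = z + 4*γ by ring, mul_inv_cancel₀ h3]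

lemma Gg_form (z : ℂ) :
    (Complex.exp z - Complex.exp (-z)) /
      ((qq γ * Complex.exp z - (qq γ)⁻¹ * Complex.exp (-z)) *
        ((qq γ)⁻¹ * Complex.exp z - qq γ * Complex.exp (-z))) = Gg γ z := by
  rw [r1, r3, r0]; rfl

lemma fgauge_as_Gg (x : Fin N → ℂ) :
    fgauge N γ x = ∏ k : Fin N, ∏ l : Fin N, (if k < l then Gg γ (x k - x l) else 1) := by
  unfold fgauge
  refine Finset.prod_congr rfl fun k _ => Finset.prod_congr rfl fun l _ => ?_
  by_cases h : k < l
  · simp only [if_pos h]; exact Gg_form γ _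
  · simp only [if_neg h]

lemma prod_split (e : Fin N → Fin N → ℂ) (i : Fin N) (hdiag : e i i = 1) :
    (∏ k : Fin N, ∏ l : Fin N, e k l) =
      (∏ j ∈ Finset.univ.erase i, (e i j * e j i)) *
      ∏ k ∈ Finset.univ.erase i, ∏ l ∈ Finset.univ.erase i, e k l := by
  have hin : ∀ k, (∏ l : Fin N, e k l) = e k i * ∏ l ∈ Finset.univ.erase i, e k l :=
    fun k => (Finset.mul_prod_erase Finset.univ (e k) (Finset.mem_univ i)).symm
  rw [← Finset.mul_prod_erase Finset.univ (fun k => ∏ l : Fin N, e k l) (Finset.mem_univ i)]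
  rw [hin i, hdiag, one_mul]
  have h2 : (∏ k ∈ Finset.univ.erase i, ∏ l : Fin N, e k l)
      = (∏ k ∈ Finset.univ.erase i, e k i) *
        ∏ k ∈ Finset.univ.erase i, ∏ l ∈ Finset.univ.erase i, e k l := by
    rw [← Finset.prod_mul_distrib]
    exact Finset.prod_congr rfl fun k _ => hin k
  rw [h2, Finset.prod_mul_distrib]
  ring

lemma ypt_self (x : Fin N → ℂ) (i : Fin N) : ypt N γ x i i = x i + 2*γ := by
  simp [ypt]

lemma ypt_ne (x : Fin N → ℂ) (i j : Fin N) (h : j ≠ i) : ypt N γ x i j = x j := by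
  simp [ypt, Pi.single_eq_of_ne h]

theorem macdonald_hamiltonian_gauge_equivalence (hN : 2 ≤ N)
    (hq : (qq γ)^4 ≠ 1)
    (u : (Fin N → ℂ) → ℂ) (x : Fin N → ℂ)
    (hx : ∀ i j : Fin N, i ≠ j →
      ¬ inPiZ (x i - x j) ∧
      ¬ inPiZ (x i - x j + 2 * γ) ∧ ¬ inPiZ (x i - x j - 2 * γ) ∧
      ¬ inPiZ (x i - x j + 4 * γ) ∧ ¬ inPiZ (x i - x j - 4 * γ)) :
    fgauge N γ x * Htil N γ (fun y => u y / fgauge N γ y) x = Hop N γ u x := by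
  have hD0 : ∀ k l : Fin N, k ≠ l → Dd (x k - x l) ≠ 0 := fun k l h => Dd_ne (hx k l h).1
  have hD1 : ∀ k l : Fin N, k ≠ l → Dd (x k - x l + 2*γ) ≠ 0 := fun k l h => Dd_ne (hx k l h).2.1
  have hD2 : ∀ k l : Fin N, k ≠ l → Dd (x k - x l - 2*γ) ≠ 0 := fun k l h => Dd_ne (hx k l h).2.2.1
  have hD3 : ∀ k l : Fin N, k ≠ l → Dd (x k - x l + 4*γ) ≠ 0 :=
    fun k l h => Dd_ne (hx k l h).2.2.2.1
  have hGgx : ∀ k l : Fin N, k ≠ l → Gg γ (x k - x l) ≠ 0 :=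
    fun k l h => Gg_ne γ _ (hD0 k l h) (hD2 k l h) (hD1 k l h)
  unfold Htil Hop
  rw [Finset.mul_sum]
  refine Finset.sum_congr rfl fun i _ => ?_
  have hyi : ypt N γ x i i = x i + 2*γ := ypt_self N γ x i
  have hyj : ∀ j : Fin N, j ≠ i → ypt N γ x i j = x j := fun j h => ypt_ne N γ x i j h
  have hdiff : ∀ j : Fin N, j ≠ i → ypt N γ x i i - ypt N γ x i j = x i - x j + 2*γ := by
    intro j h; rw [hyi, hyj j h]; ring
  have hA : (∏ j ∈ Finset.univ.erase i,
      ((qq γ)^2 * Complex.exp (ypt N γ x i i - ypt N γ x i j) -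
        (qq γ)⁻¹^2 * Complex.exp (-(ypt N γ x i i - ypt N γ x i j))) /
      (qq γ * Complex.exp (ypt N γ x i i - ypt N γ x i j) -
        (qq γ)⁻¹ * Complex.exp (-(ypt N γ x i i - ypt N γ x i j))))
      = ∏ j ∈ Finset.univ.erase i, Dd (x i - x j - 2*γ) / Dd (x i - x j) := by
    refine Finset.prod_congr rfl fun j hj => ?_
    have hji : j ≠ i := (Finset.mem_erase.mp hj).1
    rw [hdiff j hji, r2, r1,
      show x i - x j + 2*γ - 4*γ = x i - x j - 2*γ by ring,
      show x i - x j + 2*γ - 2*γ = x i - x j by ring]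
  have hB : (∏ j ∈ Finset.univ.erase i,
      (qq γ * Complex.exp (ypt N γ x i i - ypt N γ x i j) -
        (qq γ)⁻¹ * Complex.exp (-(ypt N γ x i i - ypt N γ x i j))) *
      ((qq γ)⁻¹ * Complex.exp (ypt N γ x i i - ypt N γ x i j) -
        qq γ * Complex.exp (-(ypt N γ x i i - ypt N γ x i j))) /
      (Complex.exp (ypt N γ x i i - ypt N γ x i j) -
        Complex.exp (-(ypt N γ x i i - ypt N γ x i j)))^2)
      = ∏ j ∈ Finset.univ.erase i,
          Dd (x i - x j) * Dd (x i - x j + 4*γ) / (Dd (x i - x j + 2*γ))^2 := by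
    refine Finset.prod_congr rfl fun j hj => ?_
    have hji : j ≠ i := (Finset.mem_erase.mp hj).1
    rw [hdiff j hji, r1, r3, r0,
      show x i - x j + 2*γ - 2*γ = x i - x j by ring,
      show x i - x j + 2*γ + 2*γ = x i - x j + 4*γ by ring]
  have hfx : fgauge N γ x =
      (∏ j ∈ Finset.univ.erase i,
        ((if i < j then Gg γ (x i - x j) else 1) * (if j < i then Gg γ (x j - x i) else 1))) *
      ∏ k ∈ Finset.univ.erase i, ∏ l ∈ Finset.univ.erase i,
        (if k < l then Gg γ (x k - x l) else 1) := by
    rw [fgauge_as_Gg]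
    exact prod_split N (fun k l => if k < l then Gg γ (x k - x l) else 1) i (by simp)
  have hfy : fgauge N γ (ypt N γ x i) =
      (∏ j ∈ Finset.univ.erase i,
        ((if i < j then Gg γ (x i - x j + 2*γ) else 1) *
          (if j < i then -Gg γ (x i - x j + 2*γ) else 1))) *
      ∏ k ∈ Finset.univ.erase i, ∏ l ∈ Finset.univ.erase i,
        (if k < l then Gg γ (x k - x l) else 1) := by
    rw [fgauge_as_Gg,
      prod_split N (fun k l => if k < l then Gg γ (ypt N γ x i k - ypt N γ x i l) else 1) i
        (by simp)]
    congr 1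
    · refine Finset.prod_congr rfl fun j hj => ?_
      have hji : j ≠ i := (Finset.mem_erase.mp hj).1
      have e2 : ypt N γ x i j - ypt N γ x i i = -(x i - x j + 2*γ) := by
        rw [hyi, hyj j hji]; ring
      rw [hdiff j hji, e2, Gg_neg]
    · refine Finset.prod_congr rfl fun k hk => Finset.prod_congr rfl fun l hl => ?_
      rw [hyj k (Finset.mem_erase.mp hk).1, hyj l (Finset.mem_erase.mp hl).1]
  have hGgy : ∀ j : Fin N, j ≠ i → Gg γ (x i - x j + 2*γ) ≠ 0 := by
    intro j h
    have hij : i ≠ j := Ne.symm h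
    refine Gg_ne γ _ (hD1 i j hij) ?_ ?_
    · rw [show x i - x j + 2*γ - 2*γ = x i - x j by ring]; exact hD0 i j hij
    · rw [show x i - x j + 2*γ + 2*γ = x i - x j + 4*γ by ring]; exact hD3 i j hij
  have hCx : (∏ k ∈ Finset.univ.erase i, ∏ l ∈ Finset.univ.erase i,
      (if k < l then Gg γ (x k - x l) else 1)) ≠ 0 := by
    rw [Finset.prod_ne_zero_iff]
    intro k _
    rw [Finset.prod_ne_zero_iff]
    intro l _
    by_cases h : k < l
    · simpa [h] using hGgx k l (ne_of_lt h)
    · simp [h]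
  have hfy_ne : fgauge N γ (ypt N γ x i) ≠ 0 := by
    rw [hfy]
    refine mul_ne_zero ?_ hCx
    rw [Finset.prod_ne_zero_iff]
    intro j hj
    have hji : j ≠ i := (Finset.mem_erase.mp hj).1
    refine mul_ne_zero ?_ ?_
    · by_cases h : i < j
      · simpa [h] using hGgy j hji
      · simp [h]
    · by_cases h : j < i
      · simp only [if_pos h]; exact neg_ne_zero.mpr (hGgy j hji)
      · simp [h]
  have h1 : (∏ j ∈ Finset.univ.erase i,
        ((if i < j then Gg γ (x i - x j) else 1) * (if j < i then Gg γ (x j - x i) else 1))) *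
      (∏ j ∈ Finset.univ.erase i, Dd (x i - x j - 2*γ) / Dd (x i - x j))
      = (∏ j ∈ Finset.univ.erase i,
          Dd (x i - x j) * Dd (x i - x j + 4*γ) / (Dd (x i - x j + 2*γ))^2) *
        ∏ j ∈ Finset.univ.erase i,
          ((if i < j then Gg γ (x i - x j + 2*γ) else 1) *
            (if j < i then -Gg γ (x i - x j + 2*γ) else 1)) := by
    rw [← Finset.prod_mul_distrib, ← Finset.prod_mul_distrib]
    refine Finset.prod_congr rfl fun j hj => ?_
    have hji : j ≠ i := (Finset.mem_erase.mp hj).1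
    have hij : i ≠ j := Ne.symm hji
    have k0 := key γ (x i - x j) (hD0 i j hij) (hD2 i j hij) (hD1 i j hij) (hD3 i j hij)
    rcases lt_or_gt_of_ne hij with h | h
    · simp only [if_pos h, if_neg (asymm h), mul_one]
      linear_combination k0
    · simp only [if_neg (asymm h), if_pos h, one_mul]
      have hgn : Gg γ (x j - x i) = - Gg γ (x i - x j) := by
        rw [show x j - x i = -(x i - x j) by ring, Gg_neg]
      rw [hgn]
      linear_combination -k0
  have hmain : fgauge N γ x *
        (∏ j ∈ Finset.univ.erase i, Dd (x i - x j - 2*γ) / Dd (x i - x j))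
      = (∏ j ∈ Finset.univ.erase i,
          Dd (x i - x j) * Dd (x i - x j + 4*γ) / (Dd (x i - x j + 2*γ))^2) *
        fgauge N γ (ypt N γ x i) := by
    rw [hfx, hfy]
    linear_combination (∏ k ∈ Finset.univ.erase i, ∏ l ∈ Finset.univ.erase i,
      (if k < l then Gg γ (x k - x l) else 1)) * h1
  rw [hA, hB]
  calc fgauge N γ x *
        ((∏ j ∈ Finset.univ.erase i, Dd (x i - x j - 2*γ) / Dd (x i - x j)) *
          (u (ypt N γ x i) / fgauge N γ (ypt N γ x i)))
      = (fgauge N γ x * ∏ j ∈ Finset.univ.erase i, Dd (x i - x j - 2*γ) / Dd (x i - x j)) *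
          u (ypt N γ x i) / fgauge N γ (ypt N γ x i) := by ring
    _ = ((∏ j ∈ Finset.univ.erase i,
          Dd (x i - x j) * Dd (x i - x j + 4*γ) / (Dd (x i - x j + 2*γ))^2) *
          fgauge N γ (ypt N γ x i)) * u (ypt N γ x i) / fgauge N γ (ypt N γ x i) := by
        rw [hmain]
    _ = (∏ j ∈ Finset.univ.erase i,
          Dd (x i - x j) * Dd (x i - x j + 4*γ) / (Dd (x i - x j + 2*γ))^2) * u (ypt N γ x i) *
          (fgauge N γ (ypt N γ x i) / fgauge N γ (ypt N γ x i)) := by ring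
    _ = (∏ j ∈ Finset.univ.erase i,
          Dd (x i - x j) * Dd (x i - x j + 4*γ) / (Dd (x i - x j + 2*γ))^2) * u (ypt N γ x i) := by
        rw [div_self hfy_ne, mul_one]
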